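/- Let (Ω, F, P, (F_t)_{t=0}^{T}) be a filtered probability space, Q ∼ P an equivalent probability measure, and ε a real random variable with P(ε = X) = 0 for every F_{T−1}-measurable random variable X. Let Q_{T−1} be a regular version of the F_{T−1}-conditional distribution of Q. Then for almost every ω ∈ Ω, the map ℝ → [0, 1], x ↦ Q_{T−1}(x + ε ≥ 0)(ω), is continuous. -/

import Mathlib

open MeasureTheory ProbabilityTheory Set Filter Topology ENNReal

namespace Stmt10Aux

variable {Ω : Type*} {m0 : MeasurableSpace Ω}

/-- If the law of `ε` under `ν` has no atoms, then `x ↦ ν {0 ≤ x + ε}` is continuous. -/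
lemma cont_of_no_atoms (ν : Measure Ω) [IsProbabilityMeasure ν] (ε : Ω → ℝ)
    (hε : Measurable ε) (hatom : ∀ a : ℝ, ν {ω' | ε ω' = a} = 0) :
    Continuous fun x : ℝ => (ν {ω' | 0 ≤ x + ε ω'}).toReal := by
  rw [Metric.continuous_iff]
  intro x₀ η hη
  set a : ℝ := -x₀ with ha
  -- find a small interval around `a` of small measure
  obtain ⟨δ, hδpos, hδ⟩ : ∃ δ > (0:ℝ), ν (ε ⁻¹' Ioo (a - δ) (a + δ)) < ENNReal.ofReal η := by
    have hanti : Antitone fun n : ℕ => ε ⁻¹' Ioo (a - 1/(n+1)) (a + 1/(n+1)) := by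
      intro n m hnm ω' hω'
      have h1 : (1:ℝ)/(m+1) ≤ 1/(n+1) := by
        apply one_div_le_one_div_of_le
        · positivity
        · have : (n:ℝ) ≤ m := Nat.cast_le.mpr hnm
          linarith
      simp only [mem_preimage, mem_Ioo] at hω' ⊢
      constructor
      · linarith [hω'.1]
      · linarith [hω'.2]
    have hinter : (⋂ n : ℕ, ε ⁻¹' Ioo (a - 1/(n+1)) (a + 1/(n+1))) = {ω' | ε ω' = a} := by
      ext ω'
      simp only [mem_iInter, mem_preimage, mem_Ioo, mem_setOf_eq]
      constructor
      · intro h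
        by_contra hne
        have hpos : 0 < |ε ω' - a| := abs_pos.mpr (sub_ne_zero.mpr hne)
        obtain ⟨n, hn⟩ := exists_nat_one_div_lt hpos
        rcases h n with ⟨h1, h2⟩
        have : |ε ω' - a| < 1/(n+1) := abs_lt.mpr ⟨by linarith, by linarith⟩
        linarith
      · intro h n
        have hp : (0:ℝ) < 1/(n+1) := by positivity
        constructor
        · rw [h]; linarith
        · rw [h]; linarith
    have htend : Tendsto (fun n : ℕ => ν (ε ⁻¹' Ioo (a - 1/(n+1)) (a + 1/(n+1)))) atTop
        (𝓝 (ν {ω' | ε ω' = a})) := by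
      have := tendsto_measure_iInter_atTop (μ := ν)
        (fun n => (measurableSet_Ioo.preimage hε).nullMeasurableSet)
        hanti ⟨0, measure_ne_top _ _⟩
      rw [hinter] at this
      exact this
    rw [hatom a] at htend
    obtain ⟨n, hn⟩ :=
      (htend.eventually (Iio_mem_nhds (ENNReal.ofReal_pos.mpr hη))).exists
    exact ⟨1/(n+1), by positivity, hn⟩
  refine ⟨δ, hδpos, fun x hx => ?_⟩
  rw [Real.dist_eq] at hx
  set J : Set Ω := ε ⁻¹' Ioo (a - δ) (a + δ) with hJ
  have hkey : ∀ y z : ℝ, |y - x₀| < δ → |z - x₀| < δ →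
      (ν {ω' | 0 ≤ y + ε ω'}).toReal ≤ (ν {ω' | 0 ≤ z + ε ω'}).toReal + (ν J).toReal := by
    intro y z hy hz
    have hsub : {ω' | 0 ≤ y + ε ω'} ⊆ {ω' | 0 ≤ z + ε ω'} ∪ J := by
      intro ω' hω'
      simp only [mem_setOf_eq] at hω'
      by_cases hz' : 0 ≤ z + ε ω'
      · exact Or.inl hz'
      · push_neg at hz'
        refine Or.inr ?_
        simp only [hJ, mem_preimage, mem_Ioo]
        rw [abs_lt] at hy hz
        constructor
        · simp only [ha]; linarith
        · simp only [ha]; linarith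
    have h1 : ν {ω' | 0 ≤ y + ε ω'} ≤ ν {ω' | 0 ≤ z + ε ω'} + ν J :=
      le_trans (measure_mono hsub) (measure_union_le _ _)
    have h2 := ENNReal.toReal_mono
      (ENNReal.add_ne_top.mpr ⟨measure_ne_top _ _, measure_ne_top _ _⟩) h1
    rwa [ENNReal.toReal_add (measure_ne_top _ _) (measure_ne_top _ _)] at h2
  have hx₀ : |x₀ - x₀| < δ := by simpa using hδpos
  have hJη : (ν J).toReal < η := ENNReal.toReal_lt_of_lt_ofReal hδ
  rw [Real.dist_eq, abs_sub_lt_iff]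
  constructor
  · linarith [hkey x x₀ hx hx₀]
  · linarith [hkey x₀ x hx₀ hx]

/-- The set entering the definition of the conditional quantile is nonempty. -/
lemma S_nonempty (ν : Measure Ω) [IsProbabilityMeasure ν] (ε : Ω → ℝ)
    {q : ℝ} (hq1 : q < 1) :
    {x : ℝ | ENNReal.ofReal q ≤ ν {ω' | ε ω' ≤ x}}.Nonempty := by
  have hmono : Monotone fun n : ℕ => {ω' | ε ω' ≤ (n:ℝ)} := by
    intro n m hnm ω' h
    simp only [mem_setOf_eq] at h ⊢
    exact le_trans h (Nat.cast_le.mpr hnm)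
  have hU : (⋃ n : ℕ, {ω' | ε ω' ≤ (n:ℝ)}) = univ := by
    ext ω'
    simp only [mem_iUnion, mem_setOf_eq, mem_univ, iff_true]
    exact exists_nat_ge (ε ω')
  have htend := tendsto_measure_iUnion_atTop (μ := ν) hmono
  rw [hU, measure_univ] at htend
  obtain ⟨n, hn⟩ :=
    (htend.eventually (Ioi_mem_nhds (ENNReal.ofReal_lt_one.mpr hq1))).exists
  exact ⟨n, le_of_lt hn⟩

/-- The set entering the definition of the conditional quantile is bounded below. -/
lemma S_bddBelow (ν : Measure Ω) [IsProbabilityMeasure ν] (ε : Ω → ℝ)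
    (hε : Measurable ε) {q : ℝ} (hq0 : 0 < q) :
    BddBelow {x : ℝ | ENNReal.ofReal q ≤ ν {ω' | ε ω' ≤ x}} := by
  have hanti : Antitone fun n : ℕ => {ω' | ε ω' ≤ -(n:ℝ)} := by
    intro n m hnm ω' h
    simp only [mem_setOf_eq] at h ⊢
    exact le_trans h (neg_le_neg (Nat.cast_le.mpr hnm))
  have hI : (⋂ n : ℕ, {ω' | ε ω' ≤ -(n:ℝ)}) = ∅ := by
    ext ω'
    simp only [mem_iInter, mem_setOf_eq, mem_empty_iff_false, iff_false, not_forall]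
    obtain ⟨n, hn⟩ := exists_nat_gt (-ε ω')
    exact ⟨n, by push_neg; linarith⟩
  have htend := tendsto_measure_iInter_atTop (μ := ν)
    (s := fun n : ℕ => {ω' | ε ω' ≤ -(n:ℝ)})
    (fun n => (hε measurableSet_Iic).nullMeasurableSet) hanti ⟨0, measure_ne_top _ _⟩
  rw [hI, measure_empty] at htend
  obtain ⟨n, hn⟩ :=
    (htend.eventually (Iio_mem_nhds (ENNReal.ofReal_pos.mpr hq0))).exists
  refine ⟨-(n:ℝ), fun x hx => ?_⟩
  by_contra hlt
  push_neg at hlt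
  have hmono : ν {ω' | ε ω' ≤ x} ≤ ν {ω' | ε ω' ≤ -(n:ℝ)} :=
    measure_mono fun ω' h => le_trans h (le_of_lt hlt)
  exact absurd (le_trans hx hmono) (not_le.mpr hn)

/-- If `ν (ε = a) > 0` then `a` is a conditional quantile for some rational level. -/
lemma quantile_hit (ν : Measure Ω) [IsProbabilityMeasure ν] (ε : Ω → ℝ)
    (hε : Measurable ε) (a : ℝ) (ha : ν {ω' | ε ω' = a} ≠ 0) :
    ∃ q : ℚ, 0 < q ∧ q < 1 ∧
      sInf {x : ℝ | ENNReal.ofReal (q:ℝ) ≤ ν {ω' | ε ω' ≤ x}} = a := by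
  have hsplit : {ω' | ε ω' ≤ a} = {ω' | ε ω' < a} ∪ {ω' | ε ω' = a} := by
    ext ω'
    simp only [mem_setOf_eq, mem_union]
    exact ⟨fun h => h.lt_or_eq, fun h => h.elim le_of_lt le_of_eq⟩
  have hdisj : Disjoint {ω' | ε ω' < a} {ω' | ε ω' = a} := by
    rw [Set.disjoint_left]
    intro ω' h1 h2
    exact absurd h2 (ne_of_lt h1)
  have hUeq : ν {ω' | ε ω' ≤ a} = ν {ω' | ε ω' < a} + ν {ω' | ε ω' = a} := by
    rw [hsplit, measure_union hdisj (hε (measurableSet_singleton a))]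
  have hLU : ν {ω' | ε ω' < a} < ν {ω' | ε ω' ≤ a} := by
    rw [hUeq]
    exact ENNReal.lt_add_right (measure_ne_top _ _) ha
  set Lr := (ν {ω' | ε ω' < a}).toReal with hLr
  set Ur := (ν {ω' | ε ω' ≤ a}).toReal with hUr
  have hLrUr : Lr < Ur := ENNReal.toReal_strict_mono (measure_ne_top _ _) hLU
  have hUr1 : Ur ≤ 1 := by
    simpa using ENNReal.toReal_mono ENNReal.one_ne_top
      (prob_le_one (μ := ν) (s := {ω' | ε ω' ≤ a}))
  obtain ⟨q, hq1, hq2⟩ := exists_rat_btwn (lt_min hLrUr (lt_of_lt_of_le hLrUr hUr1))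
  have hq2' : (q:ℝ) < Ur := lt_of_lt_of_le hq2 (min_le_left _ _)
  have hq2'' : (q:ℝ) < 1 := lt_of_lt_of_le hq2 (min_le_right _ _)
  have hq0 : (0:ℝ) < q := lt_of_le_of_lt ENNReal.toReal_nonneg hq1
  have hmem : a ∈ {x : ℝ | ENNReal.ofReal (q:ℝ) ≤ ν {ω' | ε ω' ≤ x}} := by
    have h := ENNReal.ofReal_le_ofReal (le_of_lt hq2')
    rwa [hUr, ENNReal.ofReal_toReal (measure_ne_top _ _)] at h
  have hlb : ∀ x ∈ {x : ℝ | ENNReal.ofReal (q:ℝ) ≤ ν {ω' | ε ω' ≤ x}}, a ≤ x := by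
    intro x hx
    by_contra hlt
    push_neg at hlt
    have h1 : ν {ω' | ε ω' ≤ x} ≤ ν {ω' | ε ω' < a} :=
      measure_mono fun ω' h => lt_of_le_of_lt h hlt
    have h2 : ν {ω' | ε ω' < a} < ENNReal.ofReal (q:ℝ) := by
      calc ν {ω' | ε ω' < a} = ENNReal.ofReal Lr :=
            (ENNReal.ofReal_toReal (measure_ne_top _ _)).symm
      _ < ENNReal.ofReal (q:ℝ) := (ENNReal.ofReal_lt_ofReal_iff hq0).mpr hq1
    exact absurd (le_trans hx h1) (not_le.mpr h2)
  refine ⟨q, by exact_mod_cast hq0, by exact_mod_cast hq2'', ?_⟩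
  exact le_antisymm (csInf_le (S_bddBelow ν ε hε hq0) hmem) (le_csInf ⟨a, hmem⟩ hlb)

/-- The conditional quantile is measurable with respect to `m`. -/
lemma measurable_quantile {mΩ : MeasurableSpace Ω} (m : MeasurableSpace Ω)
    (κ : Ω → @Measure Ω mΩ)
    [∀ ω, IsProbabilityMeasure (κ ω)] (ε : Ω → ℝ) (hε : Measurable[mΩ] ε)
    (hκ : ∀ r : ℚ, Measurable[m] fun ω => κ ω {ω' | ε ω' ≤ (r:ℝ)}) {q : ℝ}
    (hq0 : 0 < q) (hq1 : q < 1) :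
    Measurable[m] fun ω =>
      sInf {x : ℝ | ENNReal.ofReal q ≤ κ ω {ω' | ε ω' ≤ x}} := by
  refine measurable_of_Iio fun t => ?_
  have hset : (fun ω =>
        sInf {x : ℝ | ENNReal.ofReal q ≤ κ ω {ω' | ε ω' ≤ x}}) ⁻¹' Iio t
      = ⋃ r : ℚ, {ω | (r:ℝ) < t ∧
          ENNReal.ofReal q ≤ κ ω {ω' | ε ω' ≤ (r:ℝ)}} := by
    ext ω
    simp only [mem_preimage, mem_Iio, mem_iUnion, mem_setOf_eq]
    constructor
    · intro h
      obtain ⟨x, hxS, hxt⟩ :=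
        exists_lt_of_csInf_lt (S_nonempty (κ ω) ε hq1) h
      obtain ⟨r, hr1, hr2⟩ := exists_rat_btwn hxt
      refine ⟨r, hr2, le_trans hxS (measure_mono ?_)⟩
      intro ω' h'
      simp only [mem_setOf_eq] at h' ⊢
      exact le_trans h' (le_of_lt hr1)
    · rintro ⟨r, hrt, hrS⟩
      exact lt_of_le_of_lt (csInf_le (S_bddBelow _ ε hε hq0) hrS) hrt
  rw [hset]
  refine MeasurableSet.iUnion fun r => ?_
  by_cases hrt : (r:ℝ) < t
  · have heq : {ω | (r:ℝ) < t ∧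
        ENNReal.ofReal q ≤ κ ω {ω' | ε ω' ≤ (r:ℝ)}}
        = (fun ω => κ ω {ω' | ε ω' ≤ (r:ℝ)}) ⁻¹' Ici (ENNReal.ofReal q) := by
      ext ω; simp [hrt, mem_Ici]
    rw [heq]
    exact hκ r measurableSet_Ici
  · have heq : {ω | (r:ℝ) < t ∧
        ENNReal.ofReal q ≤ κ ω {ω' | ε ω' ≤ (r:ℝ)}} = ∅ := by
      ext ω; simp [hrt]
    rw [heq]
    exact MeasurableSet.empty

section Kernel

variable [StandardBorelSpace Ω] (Q : Measure Ω) [IsProbabilityMeasure Q]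
  {m : MeasurableSpace Ω}

/-- The conditional kernel of a null set is a.e. zero. -/
lemma kernel_ae_zero (hm : m ≤ m0) {A : Set Ω} (hA : MeasurableSet[m0] A) (hQA : Q A = 0) :
    ∀ᵐ ω ∂Q, condExpKernel (mΩ := m0) Q m ω A = 0 := by
  have h1 := condExpKernel_ae_eq_condExp (mΩ := m0) (μ := Q) hm hA
  have hind : A.indicator (fun _ => (1:ℝ)) =ᵐ[Q] (0 : Ω → ℝ) := by
    filter_upwards [measure_eq_zero_iff_ae_notMem.mp hQA] with ω hω
    simp [Set.indicator_of_notMem hω]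
  have h2 : (Q⟦A | m⟧) =ᵐ[Q] (0 : Ω → ℝ) := by
    have h := condExp_congr_ae (μ := Q) (m := m) hind
    rwa [condExp_zero] at h
  filter_upwards [h1, h2] with ω hω1 hω2
  have h3 : (condExpKernel (mΩ := m0) Q m ω A).toReal = 0 := by
    rw [← measureReal_def, hω1]; simpa using hω2
  exact ((ENNReal.toReal_eq_zero_iff _).mp h3).resolve_right (measure_ne_top _ _)

/-- The conditional kernel of an `m`-measurable set is a.e. its indicator. -/
lemma kernel_ae_indicator (hm : m ≤ m0) {s : Set Ω} (hs : MeasurableSet[m] s) :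
    ∀ᵐ ω ∂Q, condExpKernel (mΩ := m0) Q m ω s
      = s.indicator (fun _ => (1:ℝ≥0∞)) ω := by
  have h1 := condExpKernel_ae_eq_condExp (mΩ := m0) (μ := Q) hm (hm s hs)
  haveI : SigmaFinite (Q.trim hm) := by
    have : IsFiniteMeasure (Q.trim hm) := isFiniteMeasure_trim hm
    infer_instance
  have hint : Integrable (s.indicator (fun _ => (1:ℝ))) Q := by
    letI : MeasurableSpace Ω := m0
    exact (integrable_const (1:ℝ)).indicator (hm s hs)
  have h2 : (Q⟦s | m⟧) = s.indicator (fun _ => (1:ℝ)) :=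
    condExp_of_stronglyMeasurable hm (stronglyMeasurable_const.indicator hs) hint
  filter_upwards [h1] with ω hω
  rw [h2] at hω
  by_cases hωs : ω ∈ s
  · rw [Set.indicator_of_mem hωs] at hω ⊢
    exact (ENNReal.toReal_eq_one_iff _).mp hω
  · rw [Set.indicator_of_notMem hωs] at hω ⊢
    exact ((ENNReal.toReal_eq_zero_iff _).mp hω).resolve_right (measure_ne_top _ _)

/-- The conditional kernel is a.e. concentrated on the level sets of an
`m`-measurable function. -/
lemma kernel_ae_dirac (hm : m ≤ m0) {X : Ω → ℝ} (hX : Measurable[m] X) :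
    ∀ᵐ ω ∂Q, condExpKernel (mΩ := m0) Q m ω {ω' | X ω' ≠ X ω} = 0 := by
  have hae : ∀ᵐ ω ∂Q, ∀ r : ℚ,
      condExpKernel (mΩ := m0) Q m ω {ω' | X ω' ≤ (r:ℝ)}
        = ({ω' | X ω' ≤ (r:ℝ)}).indicator (fun _ => (1:ℝ≥0∞)) ω := by
    rw [ae_all_iff]
    exact fun r => kernel_ae_indicator Q hm (hX measurableSet_Iic)
  filter_upwards [hae] with ω hω
  have hsub : {ω' | X ω' ≠ X ω} ⊆
      ⋃ r : ℚ, (if (r:ℝ) < X ω then {ω' | X ω' ≤ (r:ℝ)} else {ω' | X ω' ≤ (r:ℝ)}ᶜ) := by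
    intro ω' hne
    rcases lt_or_gt_of_ne hne with hlt | hgt
    · obtain ⟨r, hr1, hr2⟩ := exists_rat_btwn hlt
      exact mem_iUnion.mpr ⟨r, by rw [if_pos hr2]; exact le_of_lt hr1⟩
    · obtain ⟨r, hr1, hr2⟩ := exists_rat_btwn hgt
      refine mem_iUnion.mpr ⟨r, ?_⟩
      rw [if_neg (not_lt.mpr (le_of_lt hr1))]
      exact fun h => absurd h (not_le.mpr hr2)
  refine measure_mono_null hsub (measure_iUnion_null fun r => ?_)
  by_cases hr : (r:ℝ) < X ω
  · rw [if_pos hr, hω r,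
      Set.indicator_of_notMem (by simp only [mem_setOf_eq]; exact not_le.mpr hr)]
  · rw [if_neg hr]
    have h1 : condExpKernel (mΩ := m0) Q m ω {ω' | X ω' ≤ (r:ℝ)} = 1 := by
      rw [hω r, Set.indicator_of_mem (by simp only [mem_setOf_eq]; exact not_lt.mp hr)]
    have hms : MeasurableSet[m0] {ω' | X ω' ≤ (r:ℝ)} :=
      (hX.mono hm le_rfl) measurableSet_Iic
    rw [measure_compl hms (measure_ne_top _ _), h1, measure_univ, tsub_self]

/-- Key lemma: if `Q (ε = X) = 0` for an `m`-measurable `X`, then for a.e. `ω` the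
conditional kernel gives no mass to `{ε = X ω}`. -/
lemma kernel_ae_eps_ne (hm : m ≤ m0) {ε X : Ω → ℝ} (hε : Measurable[m0] ε)
    (hX : Measurable[m] X) (hQ0 : Q {ω | ε ω = X ω} = 0) :
    ∀ᵐ ω ∂Q, condExpKernel (mΩ := m0) Q m ω {ω' | ε ω' = X ω} = 0 := by
  have hXm0 : Measurable[m0] X := hX.mono hm le_rfl
  have hA : MeasurableSet[m0] {ω | ε ω = X ω} := measurableSet_eq_fun hε hXm0
  filter_upwards [kernel_ae_zero Q hm hA hQ0, kernel_ae_dirac Q hm hX] with ω h1 h2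
  have hsub : {ω' | ε ω' = X ω} ⊆ {ω' | ε ω' = X ω'} ∪ {ω' | X ω' ≠ X ω} := by
    intro ω' h
    by_cases hx : X ω' = X ω
    · refine Or.inl ?_
      simp only [mem_setOf_eq] at h ⊢
      rw [hx]
      exact h
    · exact Or.inr hx
  exact measure_mono_null hsub (measure_union_null h1 h2)

end Kernel

end Stmt10Aux

open Stmt10Aux

/-- Let `(Ω, F, P, (F_t)_{t=0}^T)` be a filtered probability space,
`Q ∼ P` an equivalent probability measure, and `ε` a real random variable with
`P(ε = X) = 0` for every `F_{T−1}`-measurable random variable `X`. Let `Q_{T−1}`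
(`= condExpKernel Q (ℱ (T−1))`) be a regular version of the `F_{T−1}`-conditional
distribution of `Q`. Then for almost every `ω ∈ Ω`, the map
`x ↦ Q_{T−1}(x + ε ≥ 0)(ω)` is continuous on `ℝ`. -/
theorem conditional_distribution_no_atoms_continuous
    {Ω : Type*} [m0 : MeasurableSpace Ω] [StandardBorelSpace Ω]
    (P Q : Measure Ω) [IsProbabilityMeasure P] [IsProbabilityMeasure Q]
    (hPQ : P ≪ Q) (hQP : Q ≪ P)
    (ℱ : Filtration ℕ m0) (T : ℕ) (hT : 0 < T)
    (ε : Ω → ℝ) (hε : Measurable ε)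
    (hnpm : ∀ X : Ω → ℝ, Measurable[ℱ (T - 1)] X → P {ω | ε ω = X ω} = 0) :
    ∀ᵐ ω ∂P, Continuous fun x : ℝ =>
      ((condExpKernel Q (ℱ (T - 1)) ω) {ω' | 0 ≤ x + ε ω'}).toReal := by
  have hm : (ℱ (T - 1) : MeasurableSpace Ω) ≤ m0 := ℱ.le _
  have key : ∀ᵐ ω ∂Q, ∀ q : ℚ, 0 < q → q < 1 →
      condExpKernel Q (ℱ (T - 1)) ω
        {ω' | ε ω' = sInf {x : ℝ | ENNReal.ofReal (q:ℝ) ≤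
          condExpKernel Q (ℱ (T - 1)) ω {ω'' | ε ω'' ≤ x}}} = 0 := by
    rw [MeasureTheory.ae_all_iff]
    intro q
    by_cases hq : 0 < q ∧ q < 1
    · have hq0 : (0:ℝ) < (q:ℝ) := by exact_mod_cast hq.1
      have hq1 : ((q:ℝ):ℝ) < 1 := by exact_mod_cast hq.2
      haveI : ∀ ω : Ω, IsProbabilityMeasure ((condExpKernel Q (ℱ (T - 1))) ω) :=
        fun ω => inferInstance
      have hXmeas : Measurable[ℱ (T - 1)] fun ω =>
          sInf {x : ℝ | ENNReal.ofReal (q:ℝ) ≤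
            condExpKernel Q (ℱ (T - 1)) ω {ω'' | ε ω'' ≤ x}} :=
        measurable_quantile (mΩ := m0) (ℱ (T - 1)) (fun ω => condExpKernel Q (ℱ (T - 1)) ω) ε hε
          (fun r => measurable_condExpKernel (hε measurableSet_Iic)) hq0 hq1
      have hP0 := hnpm _ hXmeas
      have hQ0 := hQP hP0
      filter_upwards [kernel_ae_eps_ne Q hm hε hXmeas hQ0] with ω h _ _
      exact h
    · filter_upwards with ω h1 h2
      exact absurd ⟨h1, h2⟩ hq
  have noatom : ∀ᵐ ω ∂Q, ∀ a : ℝ,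
      condExpKernel Q (ℱ (T - 1)) ω {ω' | ε ω' = a} = 0 := by
    filter_upwards [key] with ω hω a
    by_contra ha
    obtain ⟨q, hq0, hq1, hqa⟩ :=
      quantile_hit (condExpKernel Q (ℱ (T - 1)) ω) ε hε a ha
    exact ha (hqa ▸ hω q hq0 hq1)
  have hQcont : ∀ᵐ ω ∂Q, Continuous fun x : ℝ =>
      ((condExpKernel Q (ℱ (T - 1)) ω) {ω' | 0 ≤ x + ε ω'}).toReal := by
    filter_upwards [noatom] with ω hω
    exact cont_of_no_atoms (m0 := m0) (condExpKernel Q (ℱ (T - 1)) ω) ε hε hω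
  exact hPQ.ae_le hQcont
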